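/- Let p ≥ 2 and let a, b ∈ ℝ^d be any vectors (with the convention |0|^{p−2}·0 = 0). Then the p-Laplacian nonlinearity is strongly monotone: (|a|^{p−2} a − |b|^{p−2} b) · (a − b) ≥ 2^{2−p} |a − b|^p. -/

import Mathlib

open Real

/-- Superadditivity of `x ^ q` for `1 ≤ q` on nonnegative reals. -/
lemma aux_rpow_superadd {x y q : ℝ} (hx : 0 ≤ x) (hy : 0 ≤ y) (hq : 1 ≤ q) :
    x ^ q + y ^ q ≤ (x + y) ^ q := by
  lift x to NNReal using hx
  lift y to NNReal using hy
  exact_mod_cast NNReal.add_rpow_le_rpow_add x y hq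

/-- Two-point convexity of `x ^ q` for `1 ≤ q` on nonnegative reals. -/
lemma aux_rpow_convex2 {w₁ w₂ z₁ z₂ q : ℝ} (hw₁ : 0 ≤ w₁) (hw₂ : 0 ≤ w₂)
    (hw : w₁ + w₂ = 1) (hz₁ : 0 ≤ z₁) (hz₂ : 0 ≤ z₂) (hq : 1 ≤ q) :
    (w₁ * z₁ + w₂ * z₂) ^ q ≤ w₁ * z₁ ^ q + w₂ * z₂ ^ q := by
  lift w₁ to NNReal using hw₁
  lift w₂ to NNReal using hw₂
  lift z₁ to NNReal using hz₁
  lift z₂ to NNReal using hz₂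
  have hw' : w₁ + w₂ = 1 := by exact_mod_cast hw
  exact_mod_cast NNReal.rpow_arith_mean_le_arith_mean2_rpow w₁ w₂ z₁ z₂ hw' hq

/-- Endpoint 1: the case `c = s*t` (assuming `t ≤ s`). -/
lemma aux_end1 {p s t : ℝ} (hp : 2 ≤ p) (ht : 0 ≤ t) (hts : t ≤ s) :
    (2 : ℝ) ^ (2 - p) * (s - t) ^ p ≤
      s ^ p + t ^ p - (s ^ (p - 2) + t ^ (p - 2)) * (s * t) := by
  have hs : 0 ≤ s := le_trans ht hts
  have hst : 0 ≤ s - t := by linarith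
  have hp1 : (1 : ℝ) ≤ p - 1 := by linarith
  have hpne : p - 1 ≠ 0 := by linarith
  have hpne' : p ≠ 0 := by linarith
  have hmul : ∀ x : ℝ, 0 ≤ x → x ^ (p - 1) * x = x ^ p := by
    intro x hx
    rcases eq_or_lt_of_le hx with h | h
    · rw [← h, Real.zero_rpow hpne, Real.zero_rpow hpne', zero_mul]
    · have h1 := Real.rpow_add h (p - 1) 1
      rw [Real.rpow_one, show p - 1 + 1 = p by ring] at h1
      exact h1.symm
  have hmul2 : ∀ x : ℝ, 0 ≤ x → x ^ (p - 2) * x = x ^ (p - 1) := by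
    intro x hx
    rcases eq_or_lt_of_le hx with h | h
    · rcases eq_or_lt_of_le (show (2:ℝ) ≤ p from hp) with h2 | h2
      · rw [← h, ← h2]; norm_num
      · rw [← h, Real.zero_rpow (by linarith), Real.zero_rpow (by linarith), zero_mul]
    · have h1 := Real.rpow_add h (p - 2) 1
      rw [Real.rpow_one, show p - 2 + 1 = p - 1 by ring] at h1
      exact h1.symm
  have hsuper : t ^ (p - 1) + (s - t) ^ (p - 1) ≤ s ^ (p - 1) := by
    have := aux_rpow_superadd ht hst hp1
    rwa [show t + (s - t) = s by ring] at this
  have h2p : (2 : ℝ) ^ (2 - p) ≤ 1 :=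
    Real.rpow_le_one_of_one_le_of_nonpos one_le_two (by linarith)
  have hA : (2 : ℝ) ^ (2 - p) * (s - t) ^ p ≤ (s - t) ^ p := by
    nlinarith [Real.rpow_nonneg hst p]
  have hB : (s - t) ^ p ≤ (s ^ (p - 1) - t ^ (p - 1)) * (s - t) := by
    rw [← hmul (s - t) hst]
    have : (s - t) ^ (p - 1) ≤ s ^ (p - 1) - t ^ (p - 1) := by linarith
    nlinarith
  have hC : (s ^ (p - 1) - t ^ (p - 1)) * (s - t) =
      s ^ p + t ^ p - (s ^ (p - 2) + t ^ (p - 2)) * (s * t) := by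
    have e1 := hmul s hs
    have e2 := hmul t ht
    have e3 := hmul2 s hs
    have e4 := hmul2 t ht
    nlinarith [e1, e2, e3, e4]
  linarith
/-- Endpoint 2: the case `c = -(s*t)`. -/
lemma aux_end2 {p s t : ℝ} (hp : 2 ≤ p) (hs : 0 ≤ s) (ht : 0 ≤ t) :
    (2 : ℝ) ^ (2 - p) * (s + t) ^ p ≤
      s ^ p + t ^ p + (s ^ (p - 2) + t ^ (p - 2)) * (s * t) := by
  have hp1 : (1 : ℝ) ≤ p - 1 := by linarith
  have hpne : p - 1 ≠ 0 := by linarith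
  have hpne' : p ≠ 0 := by linarith
  have hmul : ∀ x : ℝ, 0 ≤ x → x ^ (p - 1) * x = x ^ p := by
    intro x hx
    rcases eq_or_lt_of_le hx with h | h
    · rw [← h, Real.zero_rpow hpne, Real.zero_rpow hpne', zero_mul]
    · have h1 := Real.rpow_add h (p - 1) 1
      rw [Real.rpow_one, show p - 1 + 1 = p by ring] at h1
      exact h1.symm
  have hmul2 : ∀ x : ℝ, 0 ≤ x → x ^ (p - 2) * x = x ^ (p - 1) := by
    intro x hx
    rcases eq_or_lt_of_le hx with h | h
    · rcases eq_or_lt_of_le (show (2:ℝ) ≤ p from hp) with h2 | h2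
      · rw [← h, ← h2]; norm_num
      · rw [← h, Real.zero_rpow (by linarith), Real.zero_rpow (by linarith), zero_mul]
    · have h1 := Real.rpow_add h (p - 2) 1
      rw [Real.rpow_one, show p - 2 + 1 = p - 1 by ring] at h1
      exact h1.symm
  have hconv : ((1:ℝ)/2 * s + 1/2 * t) ^ (p - 1) ≤
      1/2 * s ^ (p - 1) + 1/2 * t ^ (p - 1) :=
    aux_rpow_convex2 (by norm_num) (by norm_num) (by norm_num) hs ht hp1
  have hhalf : ((1:ℝ)/2 * s + 1/2 * t) ^ (p - 1) =
      (2:ℝ) ^ (1 - p) * (s + t) ^ (p - 1) := by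
    have : (1:ℝ)/2 * s + 1/2 * t = (1/2) * (s + t) := by ring
    rw [this, Real.mul_rpow (by norm_num) (by linarith)]
    congr 1
    rw [show ((1:ℝ)/2) = (2:ℝ) ^ (-1:ℝ) by rw [Real.rpow_neg_one]; norm_num,
      ← Real.rpow_mul (by norm_num : (0:ℝ) ≤ 2)]
    congr 1; ring
  -- so 2^(1-p) * (s+t)^(p-1) ≤ 1/2 * (s^(p-1) + t^(p-1))
  have hkey : (2:ℝ) ^ (2 - p) * (s + t) ^ (p - 1) ≤ s ^ (p - 1) + t ^ (p - 1) := by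
    have h2 : (2:ℝ) ^ (2 - p) = 2 * (2:ℝ) ^ (1 - p) := by
      rw [show (2:ℝ) - p = 1 + (1 - p) by ring,
        Real.rpow_add (by norm_num : (0:ℝ) < 2), Real.rpow_one]
    rw [h2]
    nlinarith [hconv, hhalf]
  have hmulst : (s + t) ^ (p - 1) * (s + t) = (s + t) ^ p := hmul (s + t) (by linarith)
  have e1 := hmul s hs
  have e2 := hmul t ht
  have e3 := hmul2 s hs
  have e4 := hmul2 t ht
  have hstnn : (0:ℝ) ≤ s + t := by linarith
  have h2pos : (0:ℝ) < (2:ℝ) ^ (2 - p) := Real.rpow_pos_of_pos two_pos _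
  nlinarith [mul_le_mul_of_nonneg_right hkey hstnn]

/-- The scalar inequality, assuming `t ≤ s`. -/
lemma aux_key' {p s t c : ℝ} (hp : 2 ≤ p) (ht : 0 ≤ t) (hts : t ≤ s)
    (hc1 : -(s * t) ≤ c) (hc2 : c ≤ s * t) :
    (2 : ℝ) ^ (2 - p) * (s ^ 2 + t ^ 2 - 2 * c) ^ (p / 2) ≤
      s ^ p + t ^ p - (s ^ (p - 2) + t ^ (p - 2)) * c := by
  have hs : 0 ≤ s := le_trans ht hts
  have h2p : (2 : ℝ) ^ (2 - p) ≤ 1 :=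
    Real.rpow_le_one_of_one_le_of_nonpos one_le_two (by linarith)
  have h2pos : (0:ℝ) < (2:ℝ) ^ (2 - p) := Real.rpow_pos_of_pos two_pos _
  have hpne' : p ≠ 0 := by linarith
  have hsq : ∀ x : ℝ, 0 ≤ x → (x ^ 2) ^ (p / 2) = x ^ p := by
    intro x hx
    rw [← Real.rpow_natCast x 2, ← Real.rpow_mul hx]
    congr 1; push_cast; ring
  rcases eq_or_lt_of_le (mul_nonneg hs ht) with hst0 | hstpos
  · -- s*t = 0, hence c = 0 and t = 0 (since t ≤ s) or s = 0
    have hc0 : c = 0 := le_antisymm (by linarith) (by linarith)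
    rcases mul_eq_zero.mp hst0.symm with hs0 | ht0
    · have ht0 : t = 0 := le_antisymm (hs0 ▸ hts) ht
      subst hs0; subst ht0
      simp only [hc0]
      norm_num
      rw [Real.zero_rpow hpne', Real.zero_rpow (div_ne_zero hpne' two_ne_zero)]
      norm_num
    · subst ht0
      simp only [hc0]
      norm_num
      rw [Real.zero_rpow hpne', hsq s hs]
      nlinarith [Real.rpow_nonneg hs p]
  · have hspos : 0 < s := by nlinarith
    have htpos : 0 < t := by nlinarith
    set l := (s * t + c) / (2 * (s * t)) with hl_def
    set m := (s * t - c) / (2 * (s * t)) with hm_def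
    have hl : 0 ≤ l := by apply div_nonneg <;> nlinarith
    have hm : 0 ≤ m := by apply div_nonneg <;> nlinarith
    have hlm : l + m = 1 := by
      rw [hl_def, hm_def, ← add_div, div_eq_one_iff_eq (mul_pos two_pos hstpos).ne']
      ring
    have hz : s ^ 2 + t ^ 2 - 2 * c = l * (s - t) ^ 2 + m * (s + t) ^ 2 := by
      rw [hl_def, hm_def, div_mul_eq_mul_div, div_mul_eq_mul_div, ← add_div,
        eq_div_iff (mul_pos two_pos hstpos).ne']
      ring
    have hconv : (s ^ 2 + t ^ 2 - 2 * c) ^ (p / 2) ≤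
        l * (s - t) ^ p + m * (s + t) ^ p := by
      rw [hz]
      calc (l * (s - t) ^ 2 + m * (s + t) ^ 2) ^ (p / 2)
          ≤ l * ((s - t) ^ 2) ^ (p / 2) + m * ((s + t) ^ 2) ^ (p / 2) :=
            aux_rpow_convex2 hl hm hlm (sq_nonneg _) (sq_nonneg _) (by linarith)
        _ = l * (s - t) ^ p + m * (s + t) ^ p := by
            rw [hsq (s - t) (by linarith), hsq (s + t) (by linarith)]
    have h1 := aux_end1 hp ht hts
    have h2 := aux_end2 hp hs ht
    have hdecomp : s ^ p + t ^ p - (s ^ (p - 2) + t ^ (p - 2)) * c =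
        l * (s ^ p + t ^ p - (s ^ (p - 2) + t ^ (p - 2)) * (s * t)) +
        m * (s ^ p + t ^ p + (s ^ (p - 2) + t ^ (p - 2)) * (s * t)) := by
      rw [hl_def, hm_def, div_mul_eq_mul_div, div_mul_eq_mul_div, ← add_div,
        eq_div_iff (mul_pos two_pos hstpos).ne']
      ring
    have hmain := mul_le_mul_of_nonneg_left hconv h2pos.le
    have hl1 := mul_le_mul_of_nonneg_left h1 hl
    have hm1 := mul_le_mul_of_nonneg_left h2 hm
    nlinarith [hl1, hm1, hmain]

/-- The scalar inequality. -/
lemma aux_key {p s t c : ℝ} (hp : 2 ≤ p) (hs : 0 ≤ s) (ht : 0 ≤ t)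
    (hc1 : -(s * t) ≤ c) (hc2 : c ≤ s * t) :
    (2 : ℝ) ^ (2 - p) * (s ^ 2 + t ^ 2 - 2 * c) ^ (p / 2) ≤
      s ^ p + t ^ p - (s ^ (p - 2) + t ^ (p - 2)) * c := by
  rcases le_total t s with h | h
  · exact aux_key' hp ht h hc1 hc2
  · have := aux_key' hp hs h (by linarith [hc1]; ) (by linarith [hc2])
    rw [show t ^ 2 + s ^ 2 - 2 * c = s ^ 2 + t ^ 2 - 2 * c by ring] at this
    linarith

/-- Strong monotonicity of the p-Laplacian nonlinearity: for `p ≥ 2`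
and any vectors `a, b ∈ ℝ^d` (with the convention `|0|^{p-2}·0 = 0`, which is automatic
here since `‖a‖ ^ (p-2) • a = 0` when `a = 0`),
`(|a|^{p−2} a − |b|^{p−2} b) · (a − b) ≥ 2^{2−p} |a − b|^p`. -/
theorem statement12 {d : ℕ} (p : ℝ) (hp : 2 ≤ p) (a b : EuclideanSpace ℝ (Fin d)) :
    (2 : ℝ) ^ (2 - p) * ‖a - b‖ ^ p ≤
      (inner ℝ (‖a‖ ^ (p - 2) • a - ‖b‖ ^ (p - 2) • b) (a - b) : ℝ) := by
  set s := ‖a‖ with hs_def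
  set t := ‖b‖ with ht_def
  set c := (inner ℝ a b : ℝ) with hc_def
  have hs : 0 ≤ s := norm_nonneg a
  have ht : 0 ≤ t := norm_nonneg b
  have hcs := abs_real_inner_le_norm a b
  have hc1 : -(s * t) ≤ c := by
    rw [abs_le] at hcs; exact hcs.1
  have hc2 : c ≤ s * t := by
    rw [abs_le] at hcs; exact hcs.2
  have hpne' : p ≠ 0 := by linarith
  -- expand the inner product
  have hmul2 : ∀ x : ℝ, 0 ≤ x → x ^ (p - 2) * x ^ (2:ℕ) = x ^ p := by
    intro x hx
    rcases eq_or_lt_of_le hx with h | h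
    · rw [← h, Real.zero_rpow hpne']
      norm_num
    · rw [← Real.rpow_natCast x 2, ← Real.rpow_add h]
      norm_num
  have hinner : (inner ℝ (‖a‖ ^ (p - 2) • a - ‖b‖ ^ (p - 2) • b) (a - b) : ℝ) =
      s ^ p + t ^ p - (s ^ (p - 2) + t ^ (p - 2)) * c := by
    rw [inner_sub_left, real_inner_smul_left, real_inner_smul_left,
      inner_sub_right, inner_sub_right, real_inner_self_eq_norm_sq,
      real_inner_self_eq_norm_sq]
    have hba : (inner ℝ b a : ℝ) = c := by rw [hc_def]; exact real_inner_comm a b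
    rw [hba, ← hs_def, ← ht_def, ← hc_def]
    have e1 := hmul2 s hs
    have e2 := hmul2 t ht
    push_cast at e1 e2 ⊢
    nlinarith [e1, e2]
  have hnorm : ‖a - b‖ ^ p = (s ^ 2 + t ^ 2 - 2 * c) ^ (p / 2) := by
    have h1 : ‖a - b‖ ^ (2:ℕ) = s ^ 2 + t ^ 2 - 2 * c := by
      rw [norm_sub_sq_real, ← hs_def, ← ht_def, ← hc_def]; ring
    rw [show ‖a - b‖ ^ p = (‖a - b‖ ^ (2:ℕ)) ^ (p / 2) by
        rw [← Real.rpow_natCast ‖a - b‖ 2, ← Real.rpow_mul (norm_nonneg _)]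
        congr 1; push_cast; ring]
    rw [h1]
  rw [hinner, hnorm]
  exact aux_key hp hs ht hc1 hc2
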